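/- Let φ be a partial continuous map from X to X' between topological spaces with ∪-bases S and S' respectively, where S', being a ∪-basis, consists of open sets. Define ⊏_φ ⊆ S × S' by p ⊏_φ p' iff p ⋐ φ⁻¹[p'] (there is a compact set C with p ⊆ C ⊆ φ⁻¹[p'], relative to the topology). Then for any continuous φ from X to X' and φ' from X' to X'', ⊏_{φ'∘φ} = ⊏_φ ∘ ⊏_{φ'} (relational composition), provided S' is a ∪-basis (so compact subsets of open φ'⁻¹-preimages lie under basis elements way below them). -/

import Mathlib

variable {S : Type*} [SemilatticeSup S] [OrderBot S]

/-- A (nonempty) filter: an up-set in which any two elements have a common lower bound. -/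
def IsFilt (F : Set S) : Prop :=
  F.Nonempty ∧ (∀ p ∈ F, ∀ q, p ≤ q → q ∈ F) ∧
    ∀ p ∈ F, ∀ q ∈ F, ∃ t ∈ F, t ≤ p ∧ t ≤ q

/-- A filter is round if every member has a `r`-predecessor in the filter. -/
def IsRound (r : S → S → Prop) (F : Set S) : Prop :=
  ∀ p ∈ F, ∃ t ∈ F, r t p

/-- Primeness: `p ⊔ q ∈ P` implies `p ∈ P` or `q ∈ P`. -/
def IsPrimeFilt (P : Set S) : Prop :=
  ∀ p q, p ⊔ q ∈ P → p ∈ P ∨ q ∈ P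

/-- The spectrum: proper round prime filters. -/
def Spec (r : S → S → Prop) : Type _ :=
  {P : Set S // IsFilt P ∧ IsRound r P ∧ IsPrimeFilt P ∧ ⊥ ∉ P}

/-- The basic open set `Ŝ_p`. -/
def basicOpen (r : S → S → Prop) (p : S) : Set (Spec r) :=
  {P | p ∈ P.1}

instance specTop (r : S → S → Prop) : TopologicalSpace (Spec r) :=
  TopologicalSpace.generateFrom (Set.range (basicOpen r))

/-- Distributivity of `r`. -/
def IsDistrib (r : S → S → Prop) : Prop :=
  ∀ p s t, r p (s ⊔ t) → ∀ p', r p' p →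
    ∃ s' t', r s' s ∧ r t' t ∧ p' ≤ s' ⊔ t' ∧ s' ⊔ t' ≤ p

/-- `r` is auxiliary. -/
def IsAux (r : S → S → Prop) : Prop :=
  (∀ p p' q' q, p ≤ p' → r p' q' → q' ≤ q → r p q) ∧ ∀ p q, r p q → p ≤ q

/-- `r` is interpolative. -/
def IsInterp (r : S → S → Prop) : Prop :=
  ∀ p q, r p q → ∃ s, r p s ∧ r s q

/-- `r` is approximating: `≤` is the lower preorder of `r`. -/
def IsApprox (r : S → S → Prop) : Prop :=
  ∀ p q, p ≤ q ↔ ∀ t, r t p → r t q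

/-- `r` is `∨`-preserving. -/
def IsSupPres (r : S → S → Prop) : Prop :=
  ∀ p p' q q', r p' p → r q' q → r (p' ⊔ q') (p ⊔ q)

/-- `S` with `r` is a `∨`-predomain. -/
def IsPredom (r : S → S → Prop) : Prop :=
  IsAux r ∧ IsApprox r ∧ IsInterp r ∧ IsSupPres r

/-- Ideal: downward closed and closed under pairwise joins. -/
def IsIdl (I : Set S) : Prop :=
  (∀ p ∈ I, ∀ q, q ≤ p → q ∈ I) ∧ ∀ p ∈ I, ∀ q ∈ I, p ⊔ q ∈ I

/-- The way-below relation on subsets of a topological space: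
every open cover of `q` has a finite subcover of `p`. -/
def WayBelow {X : Type*} [TopologicalSpace X] (p q : Set X) : Prop :=
  ∀ C : Set (Set X), (∀ U ∈ C, IsOpen U) → q ⊆ ⋃₀ C →
    ∃ F ⊆ C, F.Finite ∧ p ⊆ ⋃₀ F

/-- Core compactness. -/
def CoreCompact (X : Type*) [TopologicalSpace X] : Prop :=
  ∀ (x : X) (U : Set X), IsOpen U → x ∈ U → ∃ V, IsOpen V ∧ x ∈ V ∧ WayBelow V U

/-- A `∪`-basis: a basis containing `∅` and closed under pairwise unions. -/
def IsUnionBasis {X : Type*} [TopologicalSpace X] (B : Set (Set X)) : Prop :=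
  TopologicalSpace.IsTopologicalBasis B ∧ ∅ ∈ B ∧ ∀ p ∈ B, ∀ q ∈ B, p ∪ q ∈ B

/-- `p ⊏_φ p'` : there is a compact `C` with `p ⊆ C ⊆ φ⁻¹[p']`. -/
def sqMor {X X' : Type*} [TopologicalSpace X] [TopologicalSpace X']
    (φ : X → X') (p : Set X) (p' : Set X') : Prop :=
  ∃ C : Set X, IsCompact C ∧ p ⊆ C ∧ C ⊆ φ ⁻¹' p'

section Aux

variable {Y : Type*} [TopologicalSpace Y]

lemma wayBelow_mono {p' p q q' : Set Y} (h1 : p' ⊆ p) (h : WayBelow p q) (h2 : q ⊆ q') :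
    WayBelow p' q' := by
  intro C hC hcov
  obtain ⟨F, hF, hfin, hsub⟩ := h C hC (h2.trans hcov)
  exact ⟨F, hF, hfin, h1.trans hsub⟩

lemma wayBelow_subset {p q : Set Y} (hq : IsOpen q) (h : WayBelow p q) : p ⊆ q := by
  obtain ⟨F, hF, _, hsub⟩ := h {q} (by simpa using hq) (by simp)
  refine hsub.trans ?_
  intro x hx
  obtain ⟨s, hs, hxs⟩ := hx
  rcases hF hs with rfl; exact hxs

lemma wayBelow_sUnion {𝒮 : Set (Set Y)} (hfin : 𝒮.Finite) {q : Set Y}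
    (h : ∀ s ∈ 𝒮, WayBelow s q) : WayBelow (⋃₀ 𝒮) q := by
  intro C hC hcov
  classical
  have : ∀ s ∈ 𝒮, ∃ F, F ⊆ C ∧ F.Finite ∧ s ⊆ ⋃₀ F := by
    intro s hs
    obtain ⟨F, h1, h2, h3⟩ := h s hs C hC hcov
    exact ⟨F, h1, h2, h3⟩
  choose! F hF1 hF2 hF3 using this
  refine ⟨⋃ s ∈ 𝒮, F s, ?_, ?_, ?_⟩
  · intro t ht
    simp only [Set.mem_iUnion] at ht
    obtain ⟨s, hs, hts⟩ := ht
    exact hF1 s hs hts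
  · exact hfin.biUnion hF2
  · intro x hx
    obtain ⟨s, hs, hxs⟩ := hx
    obtain ⟨t, ht, hxt⟩ := hF3 s hs hxs
    exact ⟨t, Set.mem_biUnion hs ht, hxt⟩

/-- Interpolation for way-below in a core compact space. -/
lemma wayBelow_interpolate (hcc : CoreCompact Y) {A B : Set Y} (hB : IsOpen B)
    (h : WayBelow A B) : ∃ W, IsOpen W ∧ WayBelow A W ∧ WayBelow W B := by
  classical
  have step : ∀ x ∈ B, ∃ W W' : Set Y, IsOpen W ∧ IsOpen W' ∧ x ∈ W' ∧
      WayBelow W B ∧ WayBelow W' W := by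
    intro x hx
    obtain ⟨W, hWo, hxW, hWB⟩ := hcc x B hB hx
    obtain ⟨W', hW'o, hxW', hW'W⟩ := hcc x W hWo hxW
    exact ⟨W, W', hWo, hW'o, hxW', hWB, hW'W⟩
  choose! W W' hWo hW'o hxW' hWB hW'W using step
  have hcov : B ⊆ ⋃₀ ((fun x => W' x) '' B) := by
    intro x hx
    exact ⟨W' x, ⟨x, hx, rfl⟩, hxW' x hx⟩
  obtain ⟨F, hFsub, hFfin, hAF⟩ := h _ (by rintro _ ⟨x, hx, rfl⟩; exact hW'o x hx) hcov
  obtain ⟨T, hTB, hTfin, hAT⟩ :=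
    (Set.exists_subset_image_finite_and (p := fun t => A ⊆ ⋃₀ t)).mp ⟨F, hFsub, hFfin, hAF⟩
  refine ⟨⋃ x ∈ T, W x, ?_, ?_, ?_⟩
  · exact isOpen_biUnion fun x hx => hWo x (hTB hx)
  · refine wayBelow_mono hAT ?_ (by rfl)
    refine wayBelow_sUnion (hTfin.image _) ?_
    rintro _ ⟨x, hx, rfl⟩
    refine wayBelow_mono (by rfl) (hW'W x (hTB hx)) ?_
    exact Set.subset_biUnion_of_mem hx
  · have heq : (⋃ x ∈ T, W x) = ⋃₀ ((fun x => W x) '' T) := by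
      ext y; simp
    rw [heq]
    refine wayBelow_sUnion (hTfin.image _) ?_
    rintro _ ⟨x, hx, rfl⟩
    exact hWB x (hTB hx)

end Aux

section Aux2

variable {Y : Type*} [TopologicalSpace Y]

omit [TopologicalSpace Y] in
lemma directedOn_sUnion_subset {D F0 : Set (Set Y)} (hD : DirectedOn (· ⊆ ·) D)
    (hsub : F0 ⊆ D) (hfin : F0.Finite) (hne : F0.Nonempty) :
    ∃ O ∈ D, ⋃₀ F0 ⊆ O := by
  have H : ∀ {F1 : Set (Set Y)}, F1.Finite → F1 ⊆ D → F1.Nonempty → ∃ O ∈ D, ⋃₀ F1 ⊆ O := by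
    intro F1 h1
    refine Set.Finite.induction_on
      (motive := fun F1 _ => F1 ⊆ D → F1.Nonempty → ∃ O ∈ D, ⋃₀ F1 ⊆ O) _ h1
      (fun _ h => absurd h (by simp)) ?_
    intro a s _ _ ih hsub' _
    rcases s.eq_empty_or_nonempty with rfl | hsne
    · exact ⟨a, hsub' (by simp), by simp⟩
    · obtain ⟨O, hO, hOsub⟩ := ih (fun x hx => hsub' (Set.mem_insert_of_mem _ hx)) hsne
      obtain ⟨O', hO', haO', hOO'⟩ := hD a (hsub' (Set.mem_insert _ _)) O hO
      refine ⟨O', hO', ?_⟩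
      rw [Set.sUnion_insert]
      exact Set.union_subset haO' (hOsub.trans hOO')
  exact H hfin hsub hne

/-- Hofmann–Mislove: in a quasi-sober space, a Scott-open filter of open sets contains
every open set that contains its intersection. -/
lemma hofmann_mislove [QuasiSober Y] (F : Set (Set Y))
    (hne : F.Nonempty)
    (hopen : ∀ G ∈ F, IsOpen G)
    (hup : ∀ G ∈ F, ∀ H, IsOpen H → G ⊆ H → H ∈ F)
    (hinter : ∀ G ∈ F, ∀ H ∈ F, G ∩ H ∈ F)
    (hscott : ∀ D : Set (Set Y), D.Nonempty → (∀ O ∈ D, IsOpen O) →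
      DirectedOn (· ⊆ ·) D → ⋃₀ D ∈ F → ∃ O ∈ D, O ∈ F)
    {W : Set Y} (hW : IsOpen W) (hsub : ⋂₀ F ⊆ W) : W ∈ F := by
  by_contra hWF
  have huniv : Set.univ ∈ F := by
    obtain ⟨G, hG⟩ := hne
    exact hup G hG _ isOpen_univ (Set.subset_univ _)
  set 𝒜 : Set (Set Y) := {C | IsClosed C ∧ C ⊆ Wᶜ ∧ Cᶜ ∉ F} with h𝒜
  have hWc : Wᶜ ∈ 𝒜 := ⟨hW.isClosed_compl, le_refl _, by simpa using hWF⟩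
  have hzorn : ∀ c ⊆ 𝒜, IsChain (· ⊆ ·) c → c.Nonempty → ∃ lb ∈ 𝒜, ∀ s ∈ c, lb ⊆ s := by
    intro c hcsub hchain hcne
    refine ⟨⋂₀ c, ⟨?_, ?_, ?_⟩, fun s hs => Set.sInter_subset_of_mem hs⟩
    · exact isClosed_sInter fun s hs => (hcsub hs).1
    · obtain ⟨s, hs⟩ := hcne
      exact (Set.sInter_subset_of_mem hs).trans (hcsub hs).2.1
    · intro hF
      rw [Set.compl_sInter] at hF
      obtain ⟨O, hO, hOF⟩ := hscott (compl '' c) (hcne.image _)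
        (by rintro _ ⟨s, hs, rfl⟩; exact (hcsub hs).1.isOpen_compl)
        (by
          rintro _ ⟨s, hs, rfl⟩ _ ⟨t, ht, rfl⟩
          rcases hchain.total hs ht with h | h
          · exact ⟨sᶜ, ⟨s, hs, rfl⟩, le_refl _, Set.compl_subset_compl.mpr h⟩
          · exact ⟨tᶜ, ⟨t, ht, rfl⟩, Set.compl_subset_compl.mpr h, le_refl _⟩)
        hF
      obtain ⟨s, hs, rfl⟩ := hO
      exact (hcsub hs).2.2 hOF
  obtain ⟨M, hMW, hMmin⟩ := zorn_superset_nonempty 𝒜 hzorn _ hWc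
  have hM : M ∈ 𝒜 := hMmin.prop
  have hMne : M.Nonempty := by
    rcases M.eq_empty_or_nonempty with rfl | h
    · exact absurd (by simpa using huniv) hM.2.2
    · exact h
  have key : ∀ C, IsClosed C → C ⊆ M → Cᶜ ∉ F → C = M := by
    intro C hC hCM hCF
    exact subset_antisymm hCM (hMmin.2 ⟨hC, hCM.trans hM.2.1, hCF⟩ hCM)
  have hirr : IsIrreducible M := by
    refine ⟨hMne, ?_⟩
    intro U V hU hV hMU hMV
    by_contra hno
    rw [Set.not_nonempty_iff_eq_empty] at hno
    have h1 : (M ∩ Uᶜ)ᶜ ∈ F := by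
      by_contra h
      have heq := key (M ∩ Uᶜ) (hM.1.inter hU.isClosed_compl) Set.inter_subset_left h
      obtain ⟨x, hxM, hxU⟩ := hMU
      have : x ∈ M ∩ Uᶜ := by rw [heq]; exact hxM
      exact this.2 hxU
    have h2 : (M ∩ Vᶜ)ᶜ ∈ F := by
      by_contra h
      have heq := key (M ∩ Vᶜ) (hM.1.inter hV.isClosed_compl) Set.inter_subset_left h
      obtain ⟨x, hxM, hxV⟩ := hMV
      have : x ∈ M ∩ Vᶜ := by rw [heq]; exact hxM
      exact this.2 hxV
    have h3 := hinter _ h1 _ h2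
    have h4 : (M ∩ Uᶜ)ᶜ ∩ (M ∩ Vᶜ)ᶜ ⊆ Mᶜ := by
      intro x hx hxM
      have hxU : x ∈ U := by
        by_contra h
        exact hx.1 ⟨hxM, h⟩
      have hxV : x ∈ V := by
        by_contra h
        exact hx.2 ⟨hxM, h⟩
      have : x ∈ M ∩ (U ∩ V) := ⟨hxM, hxU, hxV⟩
      rw [hno] at this
      exact this
    exact hM.2.2 (hup _ h3 _ hM.1.isOpen_compl h4)
  obtain ⟨x, hx⟩ := QuasiSober.sober hirr hM.1
  have hxM : x ∈ M := by
    rw [← hx.def]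
    exact subset_closure rfl
  have hxF : x ∈ ⋂₀ F := by
    intro G hG
    have hGM : (G ∩ M).Nonempty := by
      rcases (G ∩ M).eq_empty_or_nonempty with h | h
      · exfalso
        apply hM.2.2
        refine hup G hG _ hM.1.isOpen_compl ?_
        intro y hy hyM
        exact Set.eq_empty_iff_forall_notMem.mp h y ⟨hy, hyM⟩
      · exact h
    have : (G ∩ ({x} : Set Y)).Nonempty := by
      have hsub2 : G ∩ M ⊆ closure (G ∩ {x}) := by
        rw [← hx.def]
        exact (hopen G hG).inter_closure
      obtain ⟨y, hy⟩ := hGM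
      rcases (G ∩ ({x} : Set Y)).eq_empty_or_nonempty with h | h
      · rw [h, closure_empty] at hsub2
        exact absurd (hsub2 hy) (Set.notMem_empty y)
      · exact h
    obtain ⟨y, hyG, hyx⟩ := this
    have hyx' : y = x := hyx
    exact hyx' ▸ hyG
  exact hM.2.1 hxM (hsub hxF)
/-- In a sober core-compact space, every point of an open set has an open neighbourhood
contained in a compact subset of the open set. -/
lemma myExistsCompactBetweenPoint [QuasiSober Y] (hcc : CoreCompact Y)
    {x : Y} {U : Set Y} (hU : IsOpen U) (hx : x ∈ U) :
    ∃ V C, IsOpen V ∧ IsCompact C ∧ x ∈ V ∧ V ⊆ C ∧ C ⊆ U := by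
  classical
  obtain ⟨V, hV, hxV, hVU⟩ := hcc x U hU hx
  have hstep : ∀ O : {O : Set Y // IsOpen O ∧ WayBelow V O},
      ∃ O' : {O : Set Y // IsOpen O ∧ WayBelow V O}, WayBelow O'.1 O.1 := by
    rintro ⟨O, hO, hVO⟩
    obtain ⟨W, hWo, hVW, hWO⟩ := wayBelow_interpolate hcc hO hVO
    exact ⟨⟨W, hWo, hVW⟩, hWO⟩
  choose f hf using hstep
  set W : ℕ → {O : Set Y // IsOpen O ∧ WayBelow V O} :=
    fun n => f^[n] ⟨U, hU, hVU⟩ with hWdef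
  have hW0 : (W 0).1 = U := rfl
  have hWsucc : ∀ n, WayBelow (W (n + 1)).1 (W n).1 := by
    intro n
    have : W (n + 1) = f (W n) := Function.iterate_succ_apply' f n _
    rw [this]
    exact hf (W n)
  have hWopen : ∀ n, IsOpen (W n).1 := fun n => (W n).2.1
  have hVsubW : ∀ n, V ⊆ (W n).1 := fun n => wayBelow_subset (hWopen n) (W n).2.2
  have hWantitone : ∀ n k, (W (n + k)).1 ⊆ (W n).1 := by
    intro n k
    induction k with
    | zero => exact le_refl _
    | succ k ih => exact (wayBelow_subset (hWopen (n + k)) (hWsucc (n + k))).trans ih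
  set C : Set Y := ⋂ n, (W n).1 with hCdef
  set F : Set (Set Y) := {O | IsOpen O ∧ ∃ n, (W n).1 ⊆ O} with hFdef
  have hCsubW : ∀ n, C ⊆ (W n).1 := fun n => Set.iInter_subset _ n
  have hCF : ⋂₀ F = C := by
    apply subset_antisymm
    · intro y hy
      refine Set.mem_iInter.mpr fun n => hy _ ⟨hWopen n, n, le_refl _⟩
    · intro y hy O hO
      obtain ⟨_, n, hn⟩ := hO
      exact hn (hCsubW n hy)
  have hHM : ∀ O : Set Y, IsOpen O → C ⊆ O → ∃ n, (W n).1 ⊆ O := by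
    intro O hO hCO
    have : O ∈ F := by
      refine hofmann_mislove F ⟨U, hU, 0, hW0.le⟩ (fun G hG => hG.1) ?_ ?_ ?_ hO (hCF ▸ hCO)
      · exact fun G hG H hH hGH => ⟨hH, hG.2.choose, hG.2.choose_spec.trans hGH⟩
      · rintro G ⟨hGo, n, hnG⟩ H ⟨hHo, m, hmH⟩
        refine ⟨hGo.inter hHo, max n m, Set.subset_inter ?_ ?_⟩
        · have := hWantitone n (max n m - n)
          rw [Nat.add_sub_cancel' (le_max_left n m)] at this
          exact this.trans hnG
        · have := hWantitone m (max n m - m)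
          rw [Nat.add_sub_cancel' (le_max_right n m)] at this
          exact this.trans hmH
      · rintro D hDne hDopen hDdir ⟨_, n, hnD⟩
        obtain ⟨F0, hF0sub, hF0fin, hF0cov⟩ := hWsucc n D hDopen hnD
        rcases F0.eq_empty_or_nonempty with rfl | hF0ne
        · obtain ⟨O, hO⟩ := hDne
          refine ⟨O, hO, hDopen O hO, n + 1, ?_⟩
          refine hF0cov.trans ?_
          simp
        · obtain ⟨O, hOD, hOsub⟩ := directedOn_sUnion_subset hDdir hF0sub hF0fin hF0ne
          exact ⟨O, hOD, hDopen O hOD, n + 1, hF0cov.trans hOsub⟩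
    exact this.2
  have hCcpt : IsCompact C := by
    refine isCompact_of_finite_subcover fun {ι} Ui hUi hcov => ?_
    obtain ⟨n, hn⟩ := hHM (⋃ i, Ui i) (isOpen_iUnion hUi) hcov
    have hn' : (W n).1 ⊆ ⋃₀ Set.range Ui := by rwa [Set.sUnion_range]
    obtain ⟨F0, hF0sub, hF0fin, hF0cov⟩ :=
      hWsucc n (Set.range Ui) (by rintro _ ⟨i, rfl⟩; exact hUi i) hn'
    have : ∃ T ⊆ (Set.univ : Set ι), T.Finite ∧ (W (n+1)).1 ⊆ ⋃₀ (Ui '' T) := by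
      refine (Set.exists_subset_image_finite_and (p := fun t => (W (n+1)).1 ⊆ ⋃₀ t)).mp ?_
      rw [Set.image_univ]
      exact ⟨F0, hF0sub, hF0fin, hF0cov⟩
    obtain ⟨T, _, hTfin, hTcov⟩ := this
    refine ⟨hTfin.toFinset, ?_⟩
    intro y hy
    obtain ⟨_, ⟨i, hi, rfl⟩, hyi⟩ := hTcov (hCsubW (n+1) hy)
    exact Set.mem_biUnion (hTfin.mem_toFinset.mpr hi) hyi
  exact ⟨V, C, hV, hCcpt, hxV,
    fun y hy => Set.mem_iInter.mpr fun n => hVsubW n hy,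
    (hCsubW 0).trans hW0.le⟩

/-- In a sober core-compact space, a compact set inside an open set can be interpolated
by an open set and a compact set. -/
lemma myExistsCompactBetween [QuasiSober Y] (hcc : CoreCompact Y)
    {K U : Set Y} (hK : IsCompact K) (hU : IsOpen U) (hKU : K ⊆ U) :
    ∃ V C, IsOpen V ∧ IsCompact C ∧ K ⊆ V ∧ V ⊆ C ∧ C ⊆ U := by
  classical
  have : ∀ x ∈ K, ∃ VC : Set Y × Set Y, IsOpen VC.1 ∧ IsCompact VC.2 ∧ x ∈ VC.1 ∧
      VC.1 ⊆ VC.2 ∧ VC.2 ⊆ U := by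
    intro x hx
    obtain ⟨V, C, h1, h2, h3, h4, h5⟩ := myExistsCompactBetweenPoint hcc hU (hKU hx)
    exact ⟨(V, C), h1, h2, h3, h4, h5⟩
  choose! VC h1 h2 h3 h4 h5 using this
  obtain ⟨t, htK, htfin, htcov⟩ := hK.elim_finite_subcover_image
    (fun x hx => h1 x hx) (fun y hy => Set.mem_biUnion hy (h3 y hy))
  refine ⟨⋃ x ∈ t, (VC x).1, ⋃ x ∈ t, (VC x).2, ?_, ?_, htcov, ?_, ?_⟩
  · exact isOpen_biUnion fun x hx => h1 x (htK hx)
  · exact htfin.isCompact_biUnion fun x hx => h2 x (htK hx)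
  · exact Set.iUnion₂_mono fun x hx => h4 x (htK hx)
  · exact Set.iUnion₂_subset fun x hx => h5 x (htK hx)

end Aux2

section Aux3

variable {Y : Type*} [TopologicalSpace Y]

/-- A compact set inside an open set lies inside a `∪`-basis element inside the open set. -/
lemma unionBasis_compact_subset {B : Set (Set Y)} (hB : IsUnionBasis B) {K V : Set Y}
    (hK : IsCompact K) (hV : IsOpen V) (hKV : K ⊆ V) : ∃ b ∈ B, K ⊆ b ∧ b ⊆ V := by
  classical
  have hx := fun x (hx : x ∈ K) => hB.1.exists_subset_of_mem_open (hKV hx) hV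
  choose! b hbB hxb hbV using hx
  obtain ⟨t, htK, htfin, htcov⟩ := hK.elim_finite_subcover_image
    (fun x hx => hB.1.isOpen (hbB x hx)) (fun y hy => Set.mem_biUnion hy (hxb y hy))
  have hmem : ∀ {s : Set Y}, s.Finite → s ⊆ K → (⋃ x ∈ s, b x) ∈ B := by
    intro s hs
    refine Set.Finite.induction_on (motive := fun s _ => s ⊆ K → (⋃ x ∈ s, b x) ∈ B) s hs ?_ ?_
    · intro _; simpa using hB.2.1
    · intro a s _ _ ih hsub
      have heq : (⋃ x ∈ insert a s, b x) = b a ∪ ⋃ x ∈ s, b x := by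
        simp [Set.biUnion_insert]
      rw [heq]
      exact hB.2.2 _ (hbB a (hsub (Set.mem_insert _ _))) _
        (ih fun x hx => hsub (Set.mem_insert_of_mem _ hx))
  exact ⟨⋃ x ∈ t, b x, hmem htfin htK, htcov,
    Set.iUnion₂_subset fun x hx => hbV x (htK hx)⟩

end Aux3

theorem stmt18 {X X' X'' : Type*} [TopologicalSpace X] [TopologicalSpace X']
    [TopologicalSpace X''] [QuasiSober X] [T0Space X] [QuasiSober X'] [T0Space X']
    [QuasiSober X''] [T0Space X'']
    (hccX : CoreCompact X) (hccX' : CoreCompact X') (hccX'' : CoreCompact X'')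
    (B : Set (Set X)) (B' : Set (Set X')) (B'' : Set (Set X''))
    (hB : IsUnionBasis B) (hB' : IsUnionBasis B') (hB'' : IsUnionBasis B'')
    (φ : X → X') (φ' : X' → X'') (hφ : Continuous φ) (hφ' : Continuous φ') :
    ∀ p ∈ B, ∀ p'' ∈ B'',
      (sqMor (φ' ∘ φ) p p'' ↔ ∃ p' ∈ B', sqMor φ p p' ∧ sqMor φ' p' p'') := by
  intro p hp p'' hp''
  constructor
  · rintro ⟨C₀, hC₀, hpC₀, hsub⟩
    have hp''open : IsOpen p'' := hB''.1.isOpen hp''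
    have hUopen : IsOpen (φ' ⁻¹' p'') := hp''open.preimage hφ'
    have hK : IsCompact (φ '' C₀) := hC₀.image hφ
    have hKU : φ '' C₀ ⊆ φ' ⁻¹' p'' := by rintro _ ⟨x, hx, rfl⟩; exact hsub hx
    obtain ⟨V, C, hVopen, hCcpt, hKV, hVC, hCU⟩ := myExistsCompactBetween hccX' hK hUopen hKU
    obtain ⟨p', hp'B, hKp', hp'V⟩ := unionBasis_compact_subset hB' hK hVopen hKV
    exact ⟨p', hp'B, ⟨C₀, hC₀, hpC₀, fun x hx => hKp' ⟨x, hx, rfl⟩⟩,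
      ⟨C, hCcpt, hp'V.trans hVC, hCU⟩⟩
  · rintro ⟨p', _, ⟨C, hC, hpC, hCp'⟩, ⟨C', _, hp'C', hC'p''⟩⟩
    exact ⟨C, hC, hpC, fun x hx => hC'p'' (hp'C' (hCp' hx))⟩
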